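/- If s = 2^{i+j} and k = 2^i (so s ≥ k), then the extremal s-range satisfies n_s(k) ≥ (1 + s/k)^k - 1. -/

import Mathlib

/-- `i` is a sum of at most `s` elements of `A` (with repetition). -/
def Reachable (A : Finset ℕ) (s i : ℕ) : Prop :=
  ∃ f : ℕ → ℕ, (∑ x ∈ A, f x) ≤ s ∧ (∑ x ∈ A, f x * x) = i

/-- The s-range of a stamp basis `A`. -/
noncomputable def srange (A : Finset ℕ) (s : ℕ) : ℕ :=
  sSup {n | ∀ i, 1 ≤ i → i ≤ n → Reachable A s i}

/-- The extremal s-range over bases of `k` distinct positive denominations. -/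
noncomputable def exrange (k s : ℕ) : ℕ :=
  sSup {n | ∃ A : Finset ℕ, A.card = k ∧ (∀ a ∈ A, 0 < a) ∧ n = srange A s}

lemma digits_sum (q : ℕ) (hq : 2 ≤ q) (k m : ℕ) :
    ∑ t ∈ Finset.range k, (m / q ^ t % q) * q ^ t = m % q ^ k := by
  induction k with
  | zero => simp [Nat.mod_one]
  | succ k ih =>
    rw [Finset.sum_range_succ, ih, Nat.mod_pow_succ]
    ring

lemma srange_bddAbove (A : Finset ℕ) (s : ℕ) :
    BddAbove {n | ∀ i, 1 ≤ i → i ≤ n → Reachable A s i} := by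
  refine ⟨s * ∑ a ∈ A, a, fun n hn => ?_⟩
  rcases Nat.eq_zero_or_pos n with h | h
  · simp [h]
  obtain ⟨f, hf1, hf2⟩ := hn n h le_rfl
  calc n = ∑ x ∈ A, f x * x := hf2.symm
    _ ≤ ∑ x ∈ A, s * x := by
        refine Finset.sum_le_sum fun x hx => ?_
        exact Nat.mul_le_mul_right x (le_trans (Finset.single_le_sum (fun _ _ => Nat.zero_le _) hx) hf1)
    _ = s * ∑ a ∈ A, a := by rw [Finset.mul_sum]

lemma srange_le (A : Finset ℕ) (s : ℕ) : srange A s ≤ (s + 1) ^ A.card := by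
  refine csSup_le ⟨0, ?_⟩ ?_
  · intro i h1 h2
    exact absurd (h1.trans h2) (by norm_num)
  intro n hn
  classical
  set F : ℕ → (ℕ → ℕ) := fun m =>
    if h : 1 ≤ m ∧ m ≤ n then Classical.choose (hn m h.1 h.2) else 0 with hF
  have hFle : ∀ m, ∀ x ∈ A, F m x ≤ s := by
    intro m x hx
    by_cases h : 1 ≤ m ∧ m ≤ n
    · have := Classical.choose_spec (hn m h.1 h.2)
      calc F m x = (Classical.choose (hn m h.1 h.2)) x := by simp [hF, h]
        _ ≤ ∑ y ∈ A, (Classical.choose (hn m h.1 h.2)) y :=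
            Finset.single_le_sum (fun _ _ => Nat.zero_le _) hx
        _ ≤ s := this.1
    · simp [hF, h]
  have key : n = (Finset.Icc 1 n).card := by simp
  rw [key]
  have := Finset.card_le_card_of_injOn
    (f := fun m => (fun x : A => (⟨F m x.1, Nat.lt_succ_of_le (hFle m x.1 x.2)⟩ : Fin (s + 1))))
    (t := (Finset.univ : Finset (A → Fin (s + 1))))
    (fun m (_ : m ∈ Finset.Icc 1 n) => Finset.mem_univ _) ?_
  · refine le_trans this ?_
    rw [Finset.card_univ, Fintype.card_fun, Fintype.card_fin, Fintype.card_coe]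
  · intro a ha b hb hab
    simp only [Finset.coe_Icc, Set.mem_Icc, Finset.mem_Icc] at ha hb
    have hfa := Classical.choose_spec (hn a ha.1 ha.2)
    have hfb := Classical.choose_spec (hn b hb.1 hb.2)
    have heq : ∀ x ∈ A, Classical.choose (hn a ha.1 ha.2) x = Classical.choose (hn b hb.1 hb.2) x := by
      intro x hx
      have := congrFun hab ⟨x, hx⟩
      simpa [hF, ha.1, ha.2, hb.1, hb.2, Fin.ext_iff] using this
    calc a = ∑ x ∈ A, Classical.choose (hn a ha.1 ha.2) x * x := hfa.2.symm
      _ = ∑ x ∈ A, Classical.choose (hn b hb.1 hb.2) x * x :=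
          Finset.sum_congr rfl fun x hx => by rw [heq x hx]
      _ = b := hfb.2

theorem midpoint_lower_s_ge_k (i j k s : ℕ) (hs : s = 2 ^ (i + j)) (hk : k = 2 ^ i) :
    exrange k s ≥ (1 + s / k) ^ k - 1 := by
  have hdiv : s / k = 2 ^ j := by
    rw [hs, hk, Nat.pow_div (Nat.le_add_right i j) (by norm_num)]
    congr 1
    omega
  set q : ℕ := 1 + 2 ^ j with hq
  have hq2 : 2 ≤ q := by have := Nat.one_le_two_pow (n := j); omega
  have hsk : k * (q - 1) = s := by
    have : q - 1 = 2 ^ j := by omega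
    rw [this, hk, hs, ← pow_add]
  set A : Finset ℕ := (Finset.range k).image (q ^ ·) with hA
  have hinj : Function.Injective (q ^ ·) := Nat.pow_right_injective hq2
  have hcard : A.card = k := by
    rw [hA, Finset.card_image_of_injective _ hinj, Finset.card_range]
  have hpos : ∀ a ∈ A, 0 < a := by
    intro a ha
    rw [hA, Finset.mem_image] at ha
    obtain ⟨t, _, rfl⟩ := ha
    exact Nat.pow_pos (by omega)
  -- every m ≤ q^k - 1 is reachable
  have hreach : ∀ m, 1 ≤ m → m ≤ q ^ k - 1 → Reachable A s m := by
    intro m _ hm2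
    have hmlt : m < q ^ k := by
      have : 0 < q ^ k := Nat.pow_pos (by omega)
      omega
    refine ⟨fun a => m / a % q, ?_, ?_⟩
    · rw [hA, Finset.sum_image (fun a _ b _ h => hinj h)]
      calc ∑ t ∈ Finset.range k, m / q ^ t % q
          ≤ ∑ _t ∈ Finset.range k, (q - 1) := by
            refine Finset.sum_le_sum fun t _ => ?_
            have := Nat.mod_lt (m / q ^ t) (show 0 < q by omega)
            omega
        _ = k * (q - 1) := by rw [Finset.sum_const, Finset.card_range, smul_eq_mul]
        _ = s := hsk
    · rw [hA, Finset.sum_image (fun a _ b _ h => hinj h)]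
      rw [digits_sum q hq2 k m, Nat.mod_eq_of_lt hmlt]
  have hsr : q ^ k - 1 ≤ srange A s :=
    le_csSup (srange_bddAbove A s) hreach
  have hbdd : BddAbove {n | ∃ B : Finset ℕ, B.card = k ∧ (∀ a ∈ B, 0 < a) ∧ n = srange B s} := by
    refine ⟨(s + 1) ^ k, fun n hn => ?_⟩
    obtain ⟨B, hB1, _, rfl⟩ := hn
    simpa [hB1] using srange_le B s
  have hmem : srange A s ∈ {n | ∃ B : Finset ℕ, B.card = k ∧ (∀ a ∈ B, 0 < a) ∧ n = srange B s} :=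
    ⟨A, hcard, hpos, rfl⟩
  have : srange A s ≤ exrange k s := le_csSup hbdd hmem
  have hq' : 1 + s / k = q := by rw [hdiv]
  rw [ge_iff_le, hq']
  omega
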